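/- The primal-dual gradient operator of the separable minimax problem is λ-relatively Lipschitz with respect to its regularizer on encoded points, for λ := 1 + √(L^x/μ^x) + √(L^y/μ^y) + Λ^xx/μ^x + Λ^xy/√(μ^x μ^y) + Λ^yy/μ^y. Concretely: for all tuples w = (w^x, w^y, w^p, w^q), v = (v^x, v^y, v^p, v^q), z = (z^x, z^y, z^p, z^q) in 𝒳 × 𝒴 × 𝒳 × 𝒴, ⟨(μ^x w^x + ∇f(w^p) + ∇_x h(w^x, w^y)) − (μ^x z^x + ∇f(z^p) + ∇_x h(z^x, z^y)), w^x − v^x⟩ + ⟨(μ^y w^y + ∇g(w^q) − ∇_y h(w^x, w^y)) − (μ^y z^y + ∇g(z^q) − ∇_y h(z^x, z^y)), w^y − v^y⟩ + ⟨(w^p − w^x) − (z^p − z^x), ∇f(w^p) − ∇f(v^p)⟩ + ⟨(w^q − w^y) − (z^q − z^y), ∇g(w^q) − ∇g(v^q)⟩ ≤ λ·[μ^x(V_{z^x}(w^x) + V_{w^x}(v^x)) + μ^y(V_{z^y}(w^y) + V_{w^y}(v^y)) + V^f_{w^p}(z^p) + V^f_{v^p}(w^p) + V^g_{w^q}(z^q)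 + V^g_{v^q}(w^q)]. -/

import Mathlib

open scoped RealInnerProductSpace
open Filter Set Topology

/-- Bregman divergence `V^φ_u(v) = φ(v) - φ(u) - ⟪∇φ(u), v - u⟫`, with explicit gradient `φ'`. -/
noncomputable def breg {X : Type*} [NormedAddCommGroup X] [InnerProductSpace ℝ X]
    (φ : X → ℝ) (φ' : X → X) (u v : X) : ℝ :=
  φ v - φ u - ⟪φ' u, v - u⟫

section aux
variable {X : Type*} [NormedAddCommGroup X] [InnerProductSpace ℝ X] [CompleteSpace X]

set_option linter.unusedSectionVars false
set_option linter.unusedVariables false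

lemma line_hasDerivAt' {f : X → ℝ} {f' : X → X} (hd : ∀ x, HasGradientAt f (f' x) x)
    (u d : X) (t : ℝ) :
    HasDerivAt (fun s : ℝ => f (u + s • d)) ⟪f' (u + t • d), d⟫ t := by
  have h1 : HasDerivAt (fun s : ℝ => u + s • d) d t := by
    simpa using ((hasDerivAt_id t).smul_const d).const_add u
  have h2 : HasFDerivAt f (InnerProductSpace.toDual ℝ X (f' (u + t • d))) (u + t • d) :=
    (hd (u + t • d)).hasFDerivAt
  have h3 := h2.comp_hasDerivAt t h1
  simp at h3
  exact h3

lemma grad_inner_le' {f : X → ℝ} {f' : X → X} (hconv : ConvexOn ℝ Set.univ f)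
    (hd : ∀ x, HasGradientAt f (f' x) x) (u v : X) :
    ⟪f' u, v - u⟫ ≤ f v - f u := by
  have hline : HasDerivAt (fun t : ℝ => f (u + t • (v - u))) ⟪f' u, v - u⟫ 0 := by
    simpa using line_hasDerivAt' hd u (v - u) 0
  have hsl : Tendsto (slope (fun t : ℝ => f (u + t • (v - u))) 0) (𝓝[>] 0)
      (𝓝 ⟪f' u, v - u⟫) :=
    (hasDerivAt_iff_tendsto_slope.mp hline).mono_left
      (nhdsWithin_mono _ (fun x hx => ne_of_gt hx))
  refine le_of_tendsto hsl ?_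
  filter_upwards [Ioc_mem_nhdsGT_of_mem (by norm_num : (0:ℝ) ∈ Set.Ico 0 1)] with t ht
  have h0 : 0 < t := ht.1
  have h1 : t ≤ 1 := ht.2
  have hcv := hconv.2 (Set.mem_univ u) (Set.mem_univ v) (by linarith : (0:ℝ) ≤ 1 - t)
    h0.le (by ring)
  have heq : u + t • (v - u) = (1 - t) • u + t • v := by
    simp [smul_sub, sub_smul, one_smul]; abel
  have hcv' : f ((1 - t) • u + t • v) ≤ (1 - t) * f u + t * f v := by
    simpa [smul_eq_mul] using hcv
  have key : f (u + t • (v - u)) - f u ≤ t * (f v - f u) := by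
    rw [heq]; nlinarith [hcv']
  have hs : slope (fun t : ℝ => f (u + t • (v - u))) 0 t
      = (f (u + t • (v - u)) - f u) / t := by
    simp [slope, div_eq_inv_mul]
  rw [hs, div_le_iff₀ h0]
  linarith [key]

lemma descent_lemma' {f : X → ℝ} {f' : X → X} {L : ℝ}
    (hd : ∀ x, HasGradientAt f (f' x) x)
    (hsm : ∀ a b : X, ‖f' a - f' b‖ ≤ L * ‖a - b‖) (u v : X) :
    f v ≤ f u + ⟪f' u, v - u⟫ + L / 2 * ‖v - u‖ ^ 2 := by
  set d := v - u with hdv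
  set c := ‖v - u‖ ^ 2 with hc
  set D := (⟪f' u, d⟫ : ℝ) with hD
  set ψ : ℝ → ℝ := fun t => f (u + t • d) - t * D - L / 2 * t ^ 2 * c with hψdef
  have hψ : ∀ t : ℝ, HasDerivAt ψ (⟪f' (u + t • d), d⟫ - D - L / 2 * (2 * t) * c) t := by
    intro t
    exact ((line_hasDerivAt' hd u d t).sub (hasDerivAt_mul_const D)).sub
      (((hasDerivAt_pow 2 t).const_mul (L / 2)).mul_const c |>.congr_deriv (by ring))
  have hanti : AntitoneOn ψ (Icc (0:ℝ) 1) := by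
    apply antitoneOn_of_deriv_nonpos (convex_Icc 0 1)
    · exact fun x _ => ((hψ x).continuousAt).continuousWithinAt
    · exact fun x _ => ((hψ x).differentiableAt).differentiableWithinAt
    · intro x hxm
      rw [interior_Icc] at hxm
      rw [(hψ x).deriv]
      have h1 : (⟪f' (u + x • d) - f' u, d⟫ : ℝ) ≤ ‖f' (u + x • d) - f' u‖ * ‖d‖ :=
        real_inner_le_norm _ _
      have h2 : ‖f' (u + x • d) - f' u‖ ≤ L * (x * ‖d‖) := by
        have := hsm (u + x • d) u
        simpa [norm_smul, abs_of_pos hxm.1, mul_assoc] using this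
      have h3 : (⟪f' (u + x • d), d⟫ : ℝ) - D ≤ L * x * c := by
        have e : (⟪f' (u + x • d), d⟫ : ℝ) - D = ⟪f' (u + x • d) - f' u, d⟫ := by
          rw [inner_sub_left]
        rw [e, hc, hdv]
        calc (⟪f' (u + x • d) - f' u, d⟫ : ℝ) ≤ ‖f' (u + x • d) - f' u‖ * ‖d‖ := h1
          _ ≤ L * (x * ‖d‖) * ‖d‖ := by
              apply mul_le_mul_of_nonneg_right h2 (norm_nonneg _)
          _ = L * x * ‖v - u‖ ^ 2 := by rw [hdv]; ring
      nlinarith [h3]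
  have h01 : (0:ℝ) ∈ Icc (0:ℝ) 1 := by norm_num
  have h11 : (1:ℝ) ∈ Icc (0:ℝ) 1 := by norm_num
  have := hanti h01 h11 zero_le_one
  simp only [hψdef] at this
  have e0 : u + (0:ℝ) • d = u := by simp
  have e1 : u + (1:ℝ) • d = v := by simp [hdv]
  rw [e0, e1] at this
  simp only [hD, hdv] at this ⊢
  nlinarith [this]

lemma three_point' (φ : X → ℝ) (φ' : X → X) (a b c : X) :
    (⟪φ' a - φ' b, a - c⟫ : ℝ) = breg φ φ' b a + breg φ φ' a c - breg φ φ' b c := by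
  simp only [breg, inner_sub_left, inner_sub_right]
  ring

lemma cocoercive' {f : X → ℝ} {f' : X → X} {L : ℝ} (hL : 0 ≤ L)
    (hsm : ∀ a b : X, ‖f' a - f' b‖ ≤ L * ‖a - b‖)
    (hgil : ∀ u v : X, ⟪f' u, v - u⟫ ≤ f v - f u)
    (hdesc : ∀ u v : X, f v ≤ f u + ⟪f' u, v - u⟫ + L / 2 * ‖v - u‖ ^ 2)
    (u v : X) :
    ‖f' u - f' v‖ ^ 2 ≤ 2 * L * breg f f' u v := by
  rcases eq_or_lt_of_le hL with hL0 | hLpos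
  · have : ‖f' u - f' v‖ ≤ 0 := by simpa [← hL0] using hsm u v
    have h0 : ‖f' u - f' v‖ = 0 := le_antisymm this (norm_nonneg _)
    rw [h0, ← hL0]
    simp
  · set w := v - (1 / L) • (f' v - f' u) with hw
    have h1 : ⟪f' u, w - u⟫ ≤ f w - f u := hgil u w
    have h2 : f w ≤ f v + ⟪f' v, w - v⟫ + L / 2 * ‖w - v‖ ^ 2 := hdesc v w
    have hwv : w - v = -((1 / L) • (f' v - f' u)) := by rw [hw]; abel
    have hn : ‖w - v‖ ^ 2 = (1 / L) ^ 2 * ‖f' v - f' u‖ ^ 2 := by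
      rw [hwv, norm_neg, norm_smul]
      simp [abs_of_pos (by positivity : (0:ℝ) < 1 / L), mul_pow]
    have hi2 : (⟪f' v, w - v⟫ : ℝ) = -(1 / L) * ⟪f' v, f' v - f' u⟫ := by
      rw [hwv, inner_neg_right, real_inner_smul_right]; ring
    have hi1 : (⟪f' u, w - u⟫ : ℝ) = ⟪f' u, v - u⟫ - (1 / L) * ⟪f' u, f' v - f' u⟫ := by
      have : w - u = (v - u) - (1 / L) • (f' v - f' u) := by rw [hw]; abel
      rw [this, inner_sub_right, real_inner_smul_right]
    have hsq : (⟪f' v, f' v - f' u⟫ : ℝ) - ⟪f' u, f' v - f' u⟫ = ‖f' v - f' u‖ ^ 2 := by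
      rw [← inner_sub_left, real_inner_self_eq_norm_sq]
    have hnorm : ‖f' u - f' v‖ = ‖f' v - f' u‖ := norm_sub_rev _ _
    simp only [breg]
    rw [hnorm]
    have hL2 : (0:ℝ) < L := hLpos
    have expand : f v - f u - ⟪f' u, v - u⟫ ≥ 1 / (2 * L) * ‖f' v - f' u‖ ^ 2 := by
      rw [hi1] at h1
      rw [hi2, hn] at h2
      have := le_trans (by linarith : f u + (⟪f' u, v - u⟫ - (1 / L) * ⟪f' u, f' v - f' u⟫) ≤ f w)
        h2
      have hc : (1 / L) * (⟪f' v, f' v - f' u⟫ : ℝ) - (1 / L) * ⟪f' u, f' v - f' u⟫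
          = (1 / L) * ‖f' v - f' u‖ ^ 2 := by rw [← hsq]; ring
      have harr : L / 2 * ((1 / L) ^ 2 * ‖f' v - f' u‖ ^ 2)
          = 1 / (2 * L) * ‖f' v - f' u‖ ^ 2 := by field_simp
      have hhalf : (1 / L) * ‖f' v - f' u‖ ^ 2 - 1 / (2 * L) * ‖f' v - f' u‖ ^ 2
          = 1 / (2 * L) * ‖f' v - f' u‖ ^ 2 := by field_simp; ring
      linarith [this]
    calc ‖f' v - f' u‖ ^ 2 = 2 * L * (1 / (2 * L) * ‖f' v - f' u‖ ^ 2) := by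
          field_simp
      _ ≤ 2 * L * (f v - f u - ⟪f' u, v - u⟫) := by
          apply mul_le_mul_of_nonneg_left expand (by positivity)

end aux

lemma amgm_breg (L μ V n b : ℝ) (hμ : 0 < μ) (hL : 0 ≤ L) (hV : 0 ≤ V)
    (hn : 0 ≤ n) (hb : 0 ≤ b) (h : n ^ 2 ≤ 2 * L * V) :
    n * b ≤ Real.sqrt (L / μ) * (V + μ * b ^ 2 / 2) := by
  set t := Real.sqrt (L / μ) with htd
  have ht : 0 ≤ t := Real.sqrt_nonneg _
  have ht2 : t ^ 2 * μ = L := by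
    rw [htd, Real.sq_sqrt (by positivity)]; field_simp
  have hR : 0 ≤ t * (V + μ * b ^ 2 / 2) := by positivity
  rw [← ht2] at h
  have key : (n * b) ^ 2 ≤ (t * (V + μ * b ^ 2 / 2)) ^ 2 := by
    nlinarith [mul_le_mul_of_nonneg_right h (sq_nonneg b), sq_nonneg (t * (V - μ * b ^ 2 / 2))]
  calc n * b = Real.sqrt ((n * b) ^ 2) := (Real.sqrt_sq (by positivity)).symm
    _ ≤ Real.sqrt ((t * (V + μ * b ^ 2 / 2)) ^ 2) := Real.sqrt_le_sqrt key
    _ = t * (V + μ * b ^ 2 / 2) := Real.sqrt_sq hR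

lemma cross_amgm (a b μ1 μ2 lm : ℝ) (h1 : 0 < μ1) (h2 : 0 < μ2)
    (hl : 0 ≤ lm) :
    lm * (a * b) ≤ lm / Real.sqrt (μ1 * μ2) * (μ1 * a ^ 2 / 2 + μ2 * b ^ 2 / 2) := by
  have hs : 0 < Real.sqrt (μ1 * μ2) := Real.sqrt_pos.mpr (by positivity)
  have e : Real.sqrt (μ1 * μ2) = Real.sqrt μ1 * Real.sqrt μ2 := Real.sqrt_mul h1.le _
  have e1 : Real.sqrt μ1 ^ 2 = μ1 := Real.sq_sqrt h1.le
  have e2 : Real.sqrt μ2 ^ 2 = μ2 := Real.sq_sqrt h2.le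
  have key : Real.sqrt (μ1 * μ2) * (a * b) ≤ μ1 * a ^ 2 / 2 + μ2 * b ^ 2 / 2 := by
    rw [e]
    nlinarith [sq_nonneg (Real.sqrt μ1 * a - Real.sqrt μ2 * b), e1, e2]
  rw [div_mul_eq_mul_div, le_div_iff₀ hs]
  nlinarith [mul_le_mul_of_nonneg_left key hl]

set_option maxHeartbeats 2000000 in
set_option linter.unusedVariables false in
/-- The primal-dual gradient operator of the separable minimax problem is `λ`-relatively
Lipschitz with respect to its regularizer on encoded points, for
`λ = 1 + √(Lˣ/μˣ) + √(Lʸ/μʸ) + Λˣˣ/μˣ + Λˣʸ/√(μˣμʸ) + Λʸʸ/μʸ`. -/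
theorem stmt_5 {X Y : Type*} [NormedAddCommGroup X] [InnerProductSpace ℝ X]
    [FiniteDimensional ℝ X] [NormedAddCommGroup Y] [InnerProductSpace ℝ Y]
    [FiniteDimensional ℝ Y]
    (f : X → ℝ) (f' : X → X) (g : Y → ℝ) (g' : Y → Y)
    (h : X × Y → ℝ) (hx : X × Y → X) (hy : X × Y → Y)
    (μx μy Lx Ly Λxx Λxy Λyy : ℝ) (hμx : 0 < μx) (hμy : 0 < μy)
    (hLx : 0 ≤ Lx) (hLy : 0 ≤ Ly) (hΛxx : 0 ≤ Λxx) (hΛxy : 0 ≤ Λxy) (hΛyy : 0 ≤ Λyy)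
    (hfconv : ConvexOn ℝ Set.univ f) (hgconv : ConvexOn ℝ Set.univ g)
    (hfd : ∀ x, HasGradientAt f (f' x) x) (hgd : ∀ y, HasGradientAt g (g' y) y)
    (hfsmooth : ∀ a b : X, ‖f' a - f' b‖ ≤ Lx * ‖a - b‖)
    (hgsmooth : ∀ a b : Y, ‖g' a - g' b‖ ≤ Ly * ‖a - b‖)
    (hcc₁ : ∀ y : Y, ConvexOn ℝ Set.univ (fun x => h (x, y)))
    (hcc₂ : ∀ x : X, ConcaveOn ℝ Set.univ (fun y => h (x, y)))
    (hdx : ∀ p : X × Y, HasGradientAt (fun x => h (x, p.2)) (hx p) p.1)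
    (hdy : ∀ p : X × Y, HasGradientAt (fun y => h (p.1, y)) (hy p) p.2)
    (hlip₁ : ∀ u v : X × Y, ‖hx u - hx v‖ ≤ Λxx * ‖u.1 - v.1‖ + Λxy * ‖u.2 - v.2‖)
    (hlip₂ : ∀ u v : X × Y, ‖hy u - hy v‖ ≤ Λxy * ‖u.1 - v.1‖ + Λyy * ‖u.2 - v.2‖)
    (lam : ℝ)
    (hlam : lam = 1 + Real.sqrt (Lx / μx) + Real.sqrt (Ly / μy)
        + Λxx / μx + Λxy / Real.sqrt (μx * μy) + Λyy / μy)
    (wx vx zx wp vp zp : X) (wy vy zy wq vq zq : Y) :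
    ⟪(μx • wx + f' wp + hx (wx, wy)) - (μx • zx + f' zp + hx (zx, zy)), wx - vx⟫
      + ⟪(μy • wy + g' wq - hy (wx, wy)) - (μy • zy + g' zq - hy (zx, zy)), wy - vy⟫
      + ⟪(wp - wx) - (zp - zx), f' wp - f' vp⟫
      + ⟪(wq - wy) - (zq - zy), g' wq - g' vq⟫
    ≤ lam *
        (μx * (1 / 2 * ‖zx - wx‖ ^ 2) + μx * (1 / 2 * ‖wx - vx‖ ^ 2)
          + μy * (1 / 2 * ‖zy - wy‖ ^ 2) + μy * (1 / 2 * ‖wy - vy‖ ^ 2)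
          + breg f f' wp zp + breg f f' vp wp
          + breg g g' wq zq + breg g g' vq wq) := by
  have hgilf := grad_inner_le' hfconv hfd
  have hdescf := descent_lemma' hfd hfsmooth
  have hcocf := cocoercive' hLx hfsmooth hgilf hdescf
  have hVf : ∀ u v : X, 0 ≤ breg f f' u v := fun u v => by
    have := hgilf u v; simp only [breg]; linarith
  have hgilg := grad_inner_le' hgconv hgd
  have hdescg := descent_lemma' hgd hgsmooth
  have hcocg := cocoercive' hLy hgsmooth hgilg hdescg
  have hVg : ∀ u v : Y, 0 ≤ breg g g' u v := fun u v => by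
    have := hgilg u v; simp only [breg]; linarith
  rw [norm_sub_rev zx wx, norm_sub_rev zy wy, hlam]
  -- expansion of the left-hand side
  have hexp :
      (⟪(μx • wx + f' wp + hx (wx, wy)) - (μx • zx + f' zp + hx (zx, zy)), wx - vx⟫
        + ⟪(μy • wy + g' wq - hy (wx, wy)) - (μy • zy + g' zq - hy (zx, zy)), wy - vy⟫
        + ⟪(wp - wx) - (zp - zx), f' wp - f' vp⟫
        + ⟪(wq - wy) - (zq - zy), g' wq - g' vq⟫ : ℝ)
      = μx * ⟪wx - zx, wx - vx⟫ + ⟪f' wp - f' zp, wx - vx⟫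
          + ⟪hx (wx, wy) - hx (zx, zy), wx - vx⟫
        + (μy * ⟪wy - zy, wy - vy⟫ + ⟪g' wq - g' zq, wy - vy⟫
          - ⟪hy (wx, wy) - hy (zx, zy), wy - vy⟫)
        + (⟪wp - zp, f' wp - f' vp⟫ - ⟪wx - zx, f' wp - f' vp⟫)
        + (⟪wq - zq, g' wq - g' vq⟫ - ⟪wy - zy, g' wq - g' vq⟫) := by
    simp only [inner_sub_left, inner_add_left, inner_sub_right, real_inner_smul_left]
    ring
  rw [hexp]
  -- elementary bounds
  have hA1 : μx * ⟪wx - zx, wx - vx⟫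
      ≤ μx * (1 / 2 * ‖wx - zx‖ ^ 2) + μx * (1 / 2 * ‖wx - vx‖ ^ 2) := by
    have h1 := real_inner_le_norm (wx - zx) (wx - vx)
    nlinarith [mul_le_mul_of_nonneg_left h1 hμx.le,
      mul_nonneg hμx.le (sq_nonneg (‖wx - zx‖ - ‖wx - vx‖))]
  have hA2 : μy * ⟪wy - zy, wy - vy⟫
      ≤ μy * (1 / 2 * ‖wy - zy‖ ^ 2) + μy * (1 / 2 * ‖wy - vy‖ ^ 2) := by
    have h1 := real_inner_le_norm (wy - zy) (wy - vy)
    nlinarith [mul_le_mul_of_nonneg_left h1 hμy.le,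
      mul_nonneg hμy.le (sq_nonneg (‖wy - zy‖ - ‖wy - vy‖))]
  have hBf1 : (⟪f' wp - f' zp, wx - vx⟫ : ℝ)
      ≤ Real.sqrt (Lx / μx) * (breg f f' wp zp + μx * ‖wx - vx‖ ^ 2 / 2) :=
    le_trans (real_inner_le_norm _ _)
      (amgm_breg Lx μx _ _ _ hμx hLx (hVf wp zp) (norm_nonneg _) (norm_nonneg _)
        (hcocf wp zp))
  have hBg1 : (⟪g' wq - g' zq, wy - vy⟫ : ℝ)
      ≤ Real.sqrt (Ly / μy) * (breg g g' wq zq + μy * ‖wy - vy‖ ^ 2 / 2) :=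
    le_trans (real_inner_le_norm _ _)
      (amgm_breg Ly μy _ _ _ hμy hLy (hVg wq zq) (norm_nonneg _) (norm_nonneg _)
        (hcocg wq zq))
  have hBf2 : (⟪wp - zp, f' wp - f' vp⟫ : ℝ) ≤ breg f f' vp wp + breg f f' wp zp := by
    rw [real_inner_comm, three_point' f f' wp vp zp]
    linarith [hVf vp zp]
  have hBg2 : (⟪wq - zq, g' wq - g' vq⟫ : ℝ) ≤ breg g g' vq wq + breg g g' wq zq := by
    rw [real_inner_comm, three_point' g g' wq vq zq]
    linarith [hVg vq zq]
  have hBf3 : -(⟪wx - zx, f' wp - f' vp⟫ : ℝ)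
      ≤ Real.sqrt (Lx / μx) * (breg f f' vp wp + μx * ‖wx - zx‖ ^ 2 / 2) := by
    have habs : -(⟪wx - zx, f' wp - f' vp⟫ : ℝ) ≤ ‖f' wp - f' vp‖ * ‖wx - zx‖ := by
      have h1 := abs_real_inner_le_norm (wx - zx) (f' wp - f' vp)
      have h2 := neg_abs_le (⟪wx - zx, f' wp - f' vp⟫ : ℝ)
      have h3 : ‖wx - zx‖ * ‖f' wp - f' vp‖ = ‖f' wp - f' vp‖ * ‖wx - zx‖ := mul_comm _ _
      linarith
    have hcoc : ‖f' wp - f' vp‖ ^ 2 ≤ 2 * Lx * breg f f' vp wp := by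
      have := hcocf vp wp; rwa [norm_sub_rev] at this
    exact le_trans habs (amgm_breg Lx μx _ _ _ hμx hLx (hVf vp wp) (norm_nonneg _)
      (norm_nonneg _) hcoc)
  have hBg3 : -(⟪wy - zy, g' wq - g' vq⟫ : ℝ)
      ≤ Real.sqrt (Ly / μy) * (breg g g' vq wq + μy * ‖wy - zy‖ ^ 2 / 2) := by
    have habs : -(⟪wy - zy, g' wq - g' vq⟫ : ℝ) ≤ ‖g' wq - g' vq‖ * ‖wy - zy‖ := by
      have h1 := abs_real_inner_le_norm (wy - zy) (g' wq - g' vq)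
      have h2 := neg_abs_le (⟪wy - zy, g' wq - g' vq⟫ : ℝ)
      have h3 : ‖wy - zy‖ * ‖g' wq - g' vq‖ = ‖g' wq - g' vq‖ * ‖wy - zy‖ := mul_comm _ _
      linarith
    have hcoc : ‖g' wq - g' vq‖ ^ 2 ≤ 2 * Ly * breg g g' vq wq := by
      have := hcocg vq wq; rwa [norm_sub_rev] at this
    exact le_trans habs (amgm_breg Ly μy _ _ _ hμy hLy (hVg vq wq) (norm_nonneg _)
      (norm_nonneg _) hcoc)
  have hC1 : (⟪hx (wx, wy) - hx (zx, zy), wx - vx⟫ : ℝ)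
      ≤ Λxx * (‖wx - zx‖ * ‖wx - vx‖) + Λxy * (‖wy - zy‖ * ‖wx - vx‖) := by
    have h1 := real_inner_le_norm (hx (wx, wy) - hx (zx, zy)) (wx - vx)
    have h2 : ‖hx (wx, wy) - hx (zx, zy)‖ ≤ Λxx * ‖wx - zx‖ + Λxy * ‖wy - zy‖ := by
      simpa using hlip₁ (wx, wy) (zx, zy)
    nlinarith [mul_le_mul_of_nonneg_right h2 (norm_nonneg (wx - vx))]
  have hC2 : -(⟪hy (wx, wy) - hy (zx, zy), wy - vy⟫ : ℝ)
      ≤ Λxy * (‖wx - zx‖ * ‖wy - vy‖) + Λyy * (‖wy - zy‖ * ‖wy - vy‖) := by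
    have h1 := abs_real_inner_le_norm (hy (wx, wy) - hy (zx, zy)) (wy - vy)
    have h1' := neg_abs_le (⟪hy (wx, wy) - hy (zx, zy), wy - vy⟫ : ℝ)
    have h2 : ‖hy (wx, wy) - hy (zx, zy)‖ ≤ Λxy * ‖wx - zx‖ + Λyy * ‖wy - zy‖ := by
      simpa using hlip₂ (wx, wy) (zx, zy)
    nlinarith [mul_le_mul_of_nonneg_right h2 (norm_nonneg (wy - vy))]
  have hx1 : Λxx * (‖wx - zx‖ * ‖wx - vx‖)
      ≤ Λxx / μx * (μx * ‖wx - zx‖ ^ 2 / 2 + μx * ‖wx - vx‖ ^ 2 / 2) := by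
    have := cross_amgm ‖wx - zx‖ ‖wx - vx‖ μx μx Λxx hμx hμx hΛxx
    rwa [Real.sqrt_mul_self hμx.le] at this
  have hx2 : Λxy * (‖wy - zy‖ * ‖wx - vx‖)
      ≤ Λxy / Real.sqrt (μx * μy) * (μy * ‖wy - zy‖ ^ 2 / 2 + μx * ‖wx - vx‖ ^ 2 / 2) := by
    have := cross_amgm ‖wy - zy‖ ‖wx - vx‖ μy μx Λxy hμy hμx hΛxy
    rwa [mul_comm μy μx] at this
  have hx3 : Λxy * (‖wx - zx‖ * ‖wy - vy‖)
      ≤ Λxy / Real.sqrt (μx * μy) * (μx * ‖wx - zx‖ ^ 2 / 2 + μy * ‖wy - vy‖ ^ 2 / 2) :=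
    cross_amgm _ _ μx μy Λxy hμx hμy hΛxy
  have hy1 : Λyy * (‖wy - zy‖ * ‖wy - vy‖)
      ≤ Λyy / μy * (μy * ‖wy - zy‖ ^ 2 / 2 + μy * ‖wy - vy‖ ^ 2 / 2) := by
    have := cross_amgm ‖wy - zy‖ ‖wy - vy‖ μy μy Λyy hμy hμy hΛyy
    rwa [Real.sqrt_mul_self hμy.le] at this
  -- nonnegativity of the slack products
  have hs1 : 0 ≤ Real.sqrt (Lx / μx) := Real.sqrt_nonneg _
  have hs2 : 0 ≤ Real.sqrt (Ly / μy) := Real.sqrt_nonneg _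
  have hcxx : 0 ≤ Λxx / μx := div_nonneg hΛxx hμx.le
  have hcxy : 0 ≤ Λxy / Real.sqrt (μx * μy) := div_nonneg hΛxy (Real.sqrt_nonneg _)
  have hcyy : 0 ≤ Λyy / μy := div_nonneg hΛyy hμy.le
  have hP1 : 0 ≤ (Real.sqrt (Ly / μy) + Λyy / μy)
      * (μx * (1 / 2 * ‖wx - zx‖ ^ 2) + μx * (1 / 2 * ‖wx - vx‖ ^ 2)) :=
    mul_nonneg (add_nonneg hs2 hcyy) (by positivity)
  have hP2 : 0 ≤ (Real.sqrt (Lx / μx) + Λxx / μx)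
      * (μy * (1 / 2 * ‖wy - zy‖ ^ 2) + μy * (1 / 2 * ‖wy - vy‖ ^ 2)) :=
    mul_nonneg (add_nonneg hs1 hcxx) (by positivity)
  have hP3 : 0 ≤ (Real.sqrt (Ly / μy) + Λxx / μx + Λxy / Real.sqrt (μx * μy) + Λyy / μy)
      * (breg f f' wp zp + breg f f' vp wp) :=
    mul_nonneg (by linarith) (add_nonneg (hVf wp zp) (hVf vp wp))
  have hP4 : 0 ≤ (Real.sqrt (Lx / μx) + Λxx / μx + Λxy / Real.sqrt (μx * μy) + Λyy / μy)
      * (breg g g' wq zq + breg g g' vq wq) :=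
    mul_nonneg (by linarith) (add_nonneg (hVg wq zq) (hVg vq wq))
  linarith [hA1, hA2, hBf1, hBg1, hBf2, hBg2, hBf3, hBg3, hC1, hC2, hx1, hx2, hx3, hy1,
    hP1, hP2, hP3, hP4]
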